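/- With e(x) = √(λ⁻²·cos²(x) + λ²·sin²(x)) and λ > 1, the derivative e′ has a unique critical point in (0, π/2), and it is a global maximum of e′ on [0, π/2]. -/

import Mathlib

open Real

noncomputable def Ff (L x : ℝ) : ℝ := L⁻¹ ^ 2 * Real.cos x ^ 2 + L ^ 2 * Real.sin x ^ 2
noncomputable def Ee (L x : ℝ) : ℝ := Real.sqrt (Ff L x)
noncomputable def Gg (L x : ℝ) : ℝ :=
  (Real.cos x ^ 2 - Real.sin x ^ 2) * Ff L x - (L ^ 2 - L⁻¹ ^ 2) * Real.sin x ^ 2 * Real.cos x ^ 2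

lemma hFpos (L : ℝ) (hL : 1 < L) (x : ℝ) : 0 < Ff L x := by
  have h0 : (0:ℝ) < L := lt_trans one_pos hL
  have ha : 0 < L⁻¹ ^ 2 := by positivity
  have hb : L⁻¹ ^ 2 ≤ L ^ 2 := by
    have : L⁻¹ ≤ L := le_trans (le_of_lt (inv_lt_one_of_one_lt₀ hL)) hL.le
    have h0' : 0 ≤ L⁻¹ := by positivity
    nlinarith
  have hpyt := Real.sin_sq_add_cos_sq x
  unfold Ff
  nlinarith [sq_nonneg (Real.sin x), sq_nonneg (Real.cos x)]

lemma hasDerivAt_F (L x : ℝ) :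
    HasDerivAt (Ff L) (2 * (L ^ 2 - L⁻¹ ^ 2) * Real.sin x * Real.cos x) x := by
  have h1 : HasDerivAt (fun x => L⁻¹ ^ 2 * Real.cos x ^ 2)
      (L⁻¹ ^ 2 * (2 * Real.cos x ^ 1 * (-Real.sin x))) x :=
    ((Real.hasDerivAt_cos x).pow 2).const_mul _
  have h2 : HasDerivAt (fun x => L ^ 2 * Real.sin x ^ 2)
      (L ^ 2 * (2 * Real.sin x ^ 1 * Real.cos x)) x :=
    ((Real.hasDerivAt_sin x).pow 2).const_mul _
  have := h1.add h2
  refine this.congr_deriv ?_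
  ring

lemma hasDerivAt_E (L : ℝ) (hL : 1 < L) (x : ℝ) :
    HasDerivAt (Ee L) ((L ^ 2 - L⁻¹ ^ 2) * Real.sin x * Real.cos x / Real.sqrt (Ff L x)) x := by
  have h := (hasDerivAt_F L x).sqrt (ne_of_gt (hFpos L hL x))
  refine h.congr_deriv ?_
  have hs : Real.sqrt (Ff L x) ≠ 0 := ne_of_gt (Real.sqrt_pos.2 (hFpos L hL x))
  field_simp

lemma deriv_E (L : ℝ) (hL : 1 < L) :
    deriv (Ee L) = fun x => (L ^ 2 - L⁻¹ ^ 2) * Real.sin x * Real.cos x / Real.sqrt (Ff L x) := by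
  funext x; exact (hasDerivAt_E L hL x).deriv

lemma hasDerivAt_E' (L : ℝ) (hL : 1 < L) (x : ℝ) :
    HasDerivAt (fun x => (L ^ 2 - L⁻¹ ^ 2) * Real.sin x * Real.cos x / Real.sqrt (Ff L x))
      ((L ^ 2 - L⁻¹ ^ 2) * Gg L x / (Ff L x * Real.sqrt (Ff L x))) x := by
  have hF := hFpos L hL x
  have hs : Real.sqrt (Ff L x) ≠ 0 := ne_of_gt (Real.sqrt_pos.2 hF)
  have hN : HasDerivAt (fun x => (L ^ 2 - L⁻¹ ^ 2) * Real.sin x * Real.cos x)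
      ((L ^ 2 - L⁻¹ ^ 2) * (Real.cos x ^ 2 - Real.sin x ^ 2)) x := by
    have := ((Real.hasDerivAt_sin x).mul (Real.hasDerivAt_cos x)).const_mul (L ^ 2 - L⁻¹ ^ 2)
    refine (this.congr_deriv ?_).congr_of_eventuallyEq (Filter.Eventually.of_forall fun y => ?_)
    · ring
    · simp only [Pi.mul_apply]; ring
  have hD : HasDerivAt (fun x => Real.sqrt (Ff L x))
      ((L ^ 2 - L⁻¹ ^ 2) * Real.sin x * Real.cos x / Real.sqrt (Ff L x)) x := hasDerivAt_E L hL x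
  have h := hN.div hD hs
  refine h.congr_deriv ?_
  unfold Gg
  set r := Real.sqrt (Ff L x) with hr
  have hF2 : Ff L x = r ^ 2 := (Real.sq_sqrt hF.le).symm
  rw [hF2]
  field_simp

lemma deriv_deriv_E (L : ℝ) (hL : 1 < L) (x : ℝ) :
    deriv (deriv (Ee L)) x
      = (L ^ 2 - L⁻¹ ^ 2) * Gg L x / (Ff L x * Real.sqrt (Ff L x)) := by
  rw [deriv_E L hL]
  exact (hasDerivAt_E' L hL x).deriv

lemma G_factor (L : ℝ) (hL : 1 < L) (x : ℝ) :
    Gg L x = -((Real.sin x ^ 2 - (1 - L⁻¹ ^ 2) / (L ^ 2 - L⁻¹ ^ 2))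
      * ((L ^ 2 - L⁻¹ ^ 2) * Real.sin x ^ 2 + 1 + L⁻¹ ^ 2)) := by
  have h0 : (0:ℝ) < L := lt_trans one_pos hL
  have hab : L⁻¹ ^ 2 * L ^ 2 = 1 := by field_simp
  have hc : L ^ 2 - L⁻¹ ^ 2 ≠ 0 := by
    have ha : L⁻¹ ^ 2 < 1 := by
      have : L⁻¹ < 1 := inv_lt_one_of_one_lt₀ hL
      nlinarith [inv_pos.2 h0]
    have hb : 1 < L ^ 2 := by nlinarith
    nlinarith
  have hcos : Real.cos x ^ 2 = 1 - Real.sin x ^ 2 := Real.cos_sq' x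
  unfold Gg Ff
  rw [hcos]
  have hd : L ^ 2 * L ^ 2 - 1 ≠ 0 := by nlinarith [hc, hab, sq_nonneg (L*L-1)]
  have hd' : L ^ 4 - 1 ≠ 0 := by nlinarith [hc, hab, sq_nonneg (L*L-1)]
  field_simp
  ring

/-- With `e(x) = √(λ⁻² cos²x + λ² sin²x)`, `λ > 1`, the derivative `e′` has a
unique critical point (zero of `e″`) in `(0, π/2)`, and it is a global maximum of `e′` on
`[0, π/2]`. -/
theorem stmt_3 (L : ℝ) (hL : 1 < L) :
    ∃ x₀ ∈ Set.Ioo (0 : ℝ) (Real.pi / 2),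
      deriv (deriv (fun x => Real.sqrt (L⁻¹ ^ 2 * Real.cos x ^ 2 + L ^ 2 * Real.sin x ^ 2))) x₀
          = 0 ∧
      (∀ x ∈ Set.Ioo (0 : ℝ) (Real.pi / 2),
        deriv (deriv (fun x => Real.sqrt (L⁻¹ ^ 2 * Real.cos x ^ 2 + L ^ 2 * Real.sin x ^ 2))) x
            = 0 → x = x₀) ∧
      (∀ x ∈ Set.Icc (0 : ℝ) (Real.pi / 2),
        deriv (fun x => Real.sqrt (L⁻¹ ^ 2 * Real.cos x ^ 2 + L ^ 2 * Real.sin x ^ 2)) x ≤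
        deriv (fun x => Real.sqrt (L⁻¹ ^ 2 * Real.cos x ^ 2 + L ^ 2 * Real.sin x ^ 2)) x₀) := by
  have hEE : (fun x => Real.sqrt (L⁻¹ ^ 2 * Real.cos x ^ 2 + L ^ 2 * Real.sin x ^ 2)) = Ee L := rfl
  rw [hEE]
  have h0 : (0:ℝ) < L := lt_trans one_pos hL
  have ha : 0 < L⁻¹ ^ 2 := by positivity
  have ha1 : L⁻¹ ^ 2 < 1 := by
    have : L⁻¹ < 1 := inv_lt_one_of_one_lt₀ hL
    nlinarith [inv_pos.2 h0]
  have hb : 1 < L ^ 2 := by nlinarith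
  have hc : 0 < L ^ 2 - L⁻¹ ^ 2 := by nlinarith
  set s₀ : ℝ := (1 - L⁻¹ ^ 2) / (L ^ 2 - L⁻¹ ^ 2) with hs₀def
  have hs0pos : 0 < s₀ := div_pos (by linarith) hc
  have hs0lt : s₀ < 1 := by
    rw [div_lt_one hc]; linarith
  set x₀ : ℝ := Real.arcsin (Real.sqrt s₀) with hx₀def
  have hsq01 : Real.sqrt s₀ < 1 := by
    rw [show (1:ℝ) = Real.sqrt 1 by simp]
    exact Real.sqrt_lt_sqrt hs0pos.le hs0lt
  have hx₀mem : x₀ ∈ Set.Ioo (0:ℝ) (Real.pi / 2) := by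
    constructor
    · exact Real.arcsin_pos.2 (Real.sqrt_pos.2 hs0pos)
    · exact Real.arcsin_lt_pi_div_two.2 hsq01
  have hsin0 : Real.sin x₀ = Real.sqrt s₀ :=
    Real.sin_arcsin (by linarith [Real.sqrt_nonneg s₀]) hsq01.le
  have hsin2 : Real.sin x₀ ^ 2 = s₀ := by
    rw [hsin0]; exact Real.sq_sqrt hs0pos.le
  -- positive-factor fact
  have hfac : ∀ x : ℝ, 0 < (L ^ 2 - L⁻¹ ^ 2) * Real.sin x ^ 2 + 1 + L⁻¹ ^ 2 := by
    intro x
    nlinarith [sq_nonneg (Real.sin x)]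
  refine ⟨x₀, hx₀mem, ?_, ?_, ?_⟩
  · rw [deriv_deriv_E L hL, G_factor L hL, hsin2]
    rw [sub_self, zero_mul, neg_zero, mul_zero, zero_div]
  · intro x hx hD
    rw [deriv_deriv_E L hL, G_factor L hL] at hD
    have hFx := hFpos L hL x
    have hden : Ff L x * Real.sqrt (Ff L x) ≠ 0 := by positivity
    have hG0 : (Real.sin x ^ 2 - s₀) * ((L ^ 2 - L⁻¹ ^ 2) * Real.sin x ^ 2 + 1 + L⁻¹ ^ 2) = 0 := by
      have := (div_eq_zero_iff.1 hD).resolve_right hden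
      rcases mul_eq_zero.1 this with h | h
      · exact absurd h (ne_of_gt hc)
      · linarith [neg_eq_zero.1 h]
    have hsx2 : Real.sin x ^ 2 = s₀ := by
      rcases mul_eq_zero.1 hG0 with h | h
      · linarith
      · exact absurd h (ne_of_gt (hfac x))
    have hsinx : Real.sin x = Real.sqrt s₀ := by
      rw [← hsx2]
      exact (Real.sqrt_sq (Real.sin_nonneg_of_nonneg_of_le_pi hx.1.le
        (by linarith [Real.pi_pos, hx.2]))).symm
    rw [hx₀def, ← hsinx, Real.arcsin_sin (by linarith [hx.1, Real.pi_pos]) hx.2.le]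
  · -- global max of deriv E at x₀
    have hcontF : Continuous (Ff L) := by unfold Ff; fun_prop
    have hcont : Continuous (deriv (Ee L)) := by
      rw [deriv_E L hL]
      exact Continuous.div (by fun_prop) (Real.continuous_sqrt.comp hcontF)
        (fun x => ne_of_gt (Real.sqrt_pos.2 (hFpos L hL x)))
    have hsinlt : ∀ x y : ℝ, 0 ≤ x → y ≤ Real.pi / 2 → x < y →
        Real.sin x ^ 2 < Real.sin y ^ 2 := by
      intro x y hx hy hxy
      have h1 : Real.sin x < Real.sin y := by
        apply Real.strictMonoOn_sin
        · constructor <;> [linarith [Real.pi_pos]; linarith]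
        · constructor <;> [linarith [Real.pi_pos]; linarith]
        · exact hxy
      have h2 : 0 ≤ Real.sin x := Real.sin_nonneg_of_nonneg_of_le_pi hx
        (by linarith [Real.pi_pos])
      exact pow_lt_pow_left₀ h1 h2 (by norm_num)
    have hmono : StrictMonoOn (deriv (Ee L)) (Set.Icc 0 x₀) := by
      apply strictMonoOn_of_deriv_pos (convex_Icc _ _) hcont.continuousOn
      intro x hx
      rw [interior_Icc] at hx
      rw [deriv_deriv_E L hL, G_factor L hL]
      have hs2 : Real.sin x ^ 2 < s₀ := by
        rw [← hsin2]
        exact hsinlt x x₀ hx.1.le hx₀mem.2.le hx.2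
      have hG : 0 < -((Real.sin x ^ 2 - s₀) * ((L ^ 2 - L⁻¹ ^ 2) * Real.sin x ^ 2 + 1 + L⁻¹ ^ 2)) := by
        nlinarith [hfac x]
      have hFx := hFpos L hL x
      exact div_pos (mul_pos hc hG) (by positivity)
    have hanti : StrictAntiOn (deriv (Ee L)) (Set.Icc x₀ (Real.pi / 2)) := by
      apply strictAntiOn_of_deriv_neg (convex_Icc _ _) hcont.continuousOn
      intro x hx
      rw [interior_Icc] at hx
      rw [deriv_deriv_E L hL, G_factor L hL]
      have hs2 : s₀ < Real.sin x ^ 2 := by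
        rw [← hsin2]
        exact hsinlt x₀ x hx₀mem.1.le hx.2.le hx.1
      have hG : -((Real.sin x ^ 2 - s₀) * ((L ^ 2 - L⁻¹ ^ 2) * Real.sin x ^ 2 + 1 + L⁻¹ ^ 2)) < 0 := by
        nlinarith [hfac x]
      have hFx := hFpos L hL x
      exact div_neg_of_neg_of_pos (mul_neg_of_pos_of_neg hc hG) (by positivity)
    intro x hx
    rcases le_total x x₀ with h | h
    · exact hmono.monotoneOn ⟨hx.1, h⟩ ⟨hx₀mem.1.le, le_refl _⟩ h
    · exact hanti.antitoneOn ⟨le_refl _, hx₀mem.2.le⟩ ⟨h, hx.2⟩ h
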